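/- In the breadth-first construction above (same assumptions), the directed graph on [n] defined by declaring that the children of v_j are the particles v with x_v ∈ (y(j), y(j+1)) (mod 1), with root v₁, is a tree on [n] rooted at v₁: it is acyclic and connected. -/

import Mathlib

open Set Finset

/-- Breadth-first construction: the directed graph in which the parent of the particle
`v j` (for `j ≥ 1`) is the particle `v k` such that the (shifted) position of `v j`
lies in `(y k, y (k+1)) = (∑_{l<k} p (v l), ∑_{l≤k} p (v l))` is a tree rooted at
`v 0`: from every vertex, iterating the parent map reaches the root. -/
theorem stmt7 (n : ℕ) (hn : 0 < n) (x p : Fin n → ℝ)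
    (hx : ∀ i, x i ∈ Ico (0:ℝ) 1) (hxinj : Function.Injective x)
    (hp : ∀ i, 0 < p i) (hsum : ∑ i, p i = 1)
    (v : Fin n → Fin n) (hv : Function.Bijective v)
    (hord : StrictMono fun j : Fin n => Int.fract (x (v j) - x (v ⟨0, hn⟩)))
    (hmin : ∀ w : Fin n, w ≠ v ⟨0, hn⟩ →
      (-(x (v ⟨0, hn⟩)) + ∑ i, if x i < x (v ⟨0, hn⟩) then p i else 0)
        < -(x w) + ∑ i, if x i < x w then p i else 0)
    (par : Fin n → Fin n)
    (hpar : ∀ j : Fin n, 0 < (j : ℕ) → ∃ k : Fin n, par (v j) = v k ∧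
      Int.fract (x (v j) - x (v ⟨0, hn⟩)) ∈
        Ioo (∑ l ∈ Finset.Iio k, p (v l)) (∑ l ∈ Finset.Iic k, p (v l))) :
    ∀ w : Fin n, ∃ m : ℕ, par^[m] w = v ⟨0, hn⟩ := by
  set c : ℝ := x (v ⟨0, hn⟩) with hc
  set F : Fin n → ℝ := fun i => Int.fract (x i - c) with hF
  have hc0 : 0 ≤ c := (hx _).1
  have hc1 : c < 1 := (hx _).2
  -- fract computations
  have fract1 : ∀ a : ℝ, 0 ≤ a → a < 1 → c ≤ a → Int.fract (a - c) = a - c := by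
    intro a ha0 ha1 hca
    exact Int.fract_eq_self.mpr ⟨by linarith, by linarith⟩
  have fract2 : ∀ a : ℝ, 0 ≤ a → a < c → Int.fract (a - c) = a - c + 1 := by
    intro a ha0 hac
    have : Int.fract (a - c) = Int.fract (a - c + (1 : ℤ)) := (Int.fract_add_intCast _ _).symm
    rw [this]
    push_cast
    exact Int.fract_eq_self.mpr ⟨by linarith, by linarith⟩
  -- key lemma A : F w ≤ sum over particles with smaller F value
  have keyA : ∀ w : Fin n, F w ≤ ∑ i, if F i < F w then p i else 0 := by
    intro w
    by_cases hw0 : w = v ⟨0, hn⟩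
    · have : F w = 0 := by simp [hF, hw0, ← hc]
      rw [this]
      apply Finset.sum_nonneg
      intro i _
      split <;> [exact (hp i).le; exact le_rfl]
    · have hmw := hmin w hw0
      have hxw0 : 0 ≤ x w := (hx w).1
      have hxw1 : x w < 1 := (hx w).2
      rcases le_or_gt c (x w) with hcw | hcw
      · -- c ≤ x w, in fact c < x w
        have hcw' : c < x w := lt_of_le_of_ne hcw (fun h => hw0 (hxinj h.symm))
        have hFw : F w = x w - c := fract1 _ hxw0 hxw1 hcw
        have hterm : ∀ i : Fin n, (if F i < F w then p i else 0)
            = (if x i < x w then p i else 0) - (if x i < c then p i else 0) := by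
          intro i
          rcases le_or_gt c (x i) with hci | hci
          · have hFi : F i = x i - c := fract1 _ (hx i).1 (hx i).2 hci
            rw [hFi, hFw]
            have h1 : ¬ (x i < c) := not_lt.mpr hci
            by_cases h2 : x i < x w
            · simp [h1, h2, sub_lt_sub_iff_right]
            · simp [h1, h2, sub_lt_sub_iff_right]
          · have hFi : F i = x i - c + 1 := fract2 _ (hx i).1 hci
            have h2 : x i < x w := lt_trans hci hcw'
            have hxi0 : 0 ≤ x i := (hx i).1
            have h3 : ¬ (F i < F w) := by rw [hFi, hFw]; push_neg; linarith
            simp [h3, h2, hci]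
        calc F w = x w - c := hFw
          _ ≤ (∑ i, if x i < x w then p i else 0) - (∑ i, if x i < c then p i else 0) := by
              linarith
          _ = ∑ i, ((if x i < x w then p i else 0) - (if x i < c then p i else 0)) := by
              rw [Finset.sum_sub_distrib]
          _ = ∑ i, if F i < F w then p i else 0 := by
              exact Finset.sum_congr rfl (fun i _ => (hterm i).symm)
      · -- x w < c
        have hFw : F w = x w - c + 1 := fract2 _ hxw0 hcw
        have hterm : ∀ i : Fin n, (if F i < F w then p i else 0)
            = (if x i < x w then p i else 0) + (p i - (if x i < c then p i else 0)) := by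
          intro i
          rcases le_or_gt c (x i) with hci | hci
          · have hFi : F i = x i - c := fract1 _ (hx i).1 (hx i).2 hci
            have h1 : ¬ (x i < c) := not_lt.mpr hci
            have h2 : ¬ (x i < x w) := by push_neg; linarith
            have h3 : F i < F w := by rw [hFi, hFw]; linarith [(hx i).2]
            simp [h1, h2, h3]
          · have hFi : F i = x i - c + 1 := fract2 _ (hx i).1 hci
            have h3 : F i < F w ↔ x i < x w := by rw [hFi, hFw]; constructor <;> intro <;> linarith
            by_cases h2 : x i < x w
            · simp [h3.mpr h2, h2, hci]
            · have h4 : ¬ (F i < F w) := fun h => h2 (h3.mp h)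
              simp [h4, h2, hci]
        calc F w = x w - c + 1 := hFw
          _ ≤ (∑ i, if x i < x w then p i else 0)
              + ((∑ i, p i) - (∑ i, if x i < c then p i else 0)) := by
              rw [hsum]; linarith
          _ = ∑ i, ((if x i < x w then p i else 0) + (p i - (if x i < c then p i else 0))) := by
              rw [Finset.sum_add_distrib, Finset.sum_sub_distrib]
          _ = ∑ i, if F i < F w then p i else 0 := by
              exact Finset.sum_congr rfl (fun i _ => (hterm i).symm)
  -- reindexing : sum over Iio j equals sum over particles with smaller F value
  have hIio : ∀ j : Fin n, ∑ l ∈ Finset.Iio j, p (v l) = ∑ i, if F i < F (v j) then p i else 0 := by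
    intro j
    have h1 : Finset.Iio j = Finset.univ.filter (fun l => F (v l) < F (v j)) := by
      ext l
      simp only [Finset.mem_Iio, Finset.mem_filter, Finset.mem_univ, true_and]
      exact (hord.lt_iff_lt (a := l) (b := j)).symm
    rw [h1, Finset.sum_filter]
    exact Fintype.sum_bijective v hv _ _ (fun l => rfl)
  -- main induction
  have main : ∀ N : ℕ, ∀ j : Fin n, (j : ℕ) < N → ∃ m : ℕ, par^[m] (v j) = v ⟨0, hn⟩ := by
    intro N
    induction N with
    | zero => intro j hj; omega
    | succ N ih =>
      intro j hj
      by_cases h0 : (j : ℕ) = 0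
      · refine ⟨0, ?_⟩
        have : j = ⟨0, hn⟩ := Fin.ext h0
        simp [this]
      · obtain ⟨k, hk1, hk2⟩ := hpar j (Nat.pos_of_ne_zero h0)
        have hklt : k < j := by
          have h1 : F (v k) ≤ ∑ l ∈ Finset.Iio k, p (v l) := by
            rw [hIio k]; exact keyA (v k)
          have h2 : (∑ l ∈ Finset.Iio k, p (v l)) < F (v j) := hk2.1
          exact hord.lt_iff_lt.mp (lt_of_le_of_lt h1 h2)
        obtain ⟨m, hm⟩ := ih k (by have := hklt; omega)
        exact ⟨m + 1, by rw [Function.iterate_succ_apply, hk1, hm]⟩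
  intro w
  obtain ⟨j, hj⟩ := hv.2 w
  rw [← hj]
  exact main n j j.isLt
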